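/- Let δ ∈ (0,1), D = ((1+δ)/(1−δ))² − 1, n ≥ 1, and let f : v ↦ (f_1(v),...,f_n(v)) be any allocation function satisfying Σ_j f_j(v)·v_j + D·f_i(v)·v_i ≥ (v_i/n)(n+D) for all i and all bid profiles v of non-negative reals. Suppose θ is a profile of non-negative reals with ((1−δ)/(1+δ))·v_j ≤ θ_j ≤ ((1+δ)/(1−δ))·v_j for all j. Then for every i: Σ_{j=1}^n θ_j·f_j(v) ≥ (((1−δ)² + 4δ/n)/(1+δ)²)·θ_i. -/

import Mathlib

set_option maxHeartbeats 1600000 in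
theorem stmt9 (δ : ℝ) (hδ : δ ∈ Set.Ioo (0:ℝ) 1) (n : ℕ) (hn : 1 ≤ n)
    (v θ f : ℕ → ℝ)
    (hvnn : ∀ j, 1 ≤ j → j ≤ n → 0 ≤ v j)
    (hfnn : ∀ j, 1 ≤ j → j ≤ n → 0 ≤ f j)
    (hfsum : ∑ j ∈ Finset.Icc 1 n, f j ≤ 1)
    (hgood : ∀ i, 1 ≤ i → i ≤ n →
      (∑ j ∈ Finset.Icc 1 n, f j * v j)
        + (((1 + δ) / (1 - δ)) ^ 2 - 1) * f i * v i
      ≥ (v i / (n : ℝ)) * ((n : ℝ) + (((1 + δ) / (1 - δ)) ^ 2 - 1)))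
    (hθ : ∀ j, 1 ≤ j → j ≤ n →
      ((1 - δ) / (1 + δ)) * v j ≤ θ j ∧ θ j ≤ ((1 + δ) / (1 - δ)) * v j) :
    ∀ i, 1 ≤ i → i ≤ n →
      ∑ j ∈ Finset.Icc 1 n, θ j * f j
        ≥ (((1 - δ) ^ 2 + 4 * δ / (n : ℝ)) / (1 + δ) ^ 2) * θ i := by
  obtain ⟨hδ0, hδ1⟩ := hδ
  intro i h1i hin
  have h1d : (0:ℝ) < 1 - δ := by linarith
  have h2d : (0:ℝ) < 1 + δ := by linarith
  have hn0 : (0:ℝ) < (n : ℝ) := by exact_mod_cast Nat.lt_of_lt_of_le Nat.zero_lt_one hn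
  set r : ℝ := (1 - δ) / (1 + δ) with hr
  have hr0 : 0 < r := div_pos h1d h2d
  set D : ℝ := ((1 + δ) / (1 - δ)) ^ 2 - 1 with hD
  set c : ℝ := ((1 - δ) ^ 2 + 4 * δ / (n : ℝ)) / (1 + δ) ^ 2 with hc
  set S : ℝ := ∑ j ∈ Finset.Icc 1 n, f j * v j with hS
  set t : ℝ := f i * v i with ht
  clear_value r D c S t
  have hmem : i ∈ Finset.Icc 1 n := Finset.mem_Icc.mpr ⟨h1i, hin⟩
  have hvi : 0 ≤ v i := hvnn i h1i hin
  have hfi : 0 ≤ f i := hfnn i h1i hin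
  have hA : t ≤ S := by
    rw [hS, ht]
    refine Finset.single_le_sum (f := fun j => f j * v j) (fun j hj => ?_) hmem
    obtain ⟨hj1, hj2⟩ := Finset.mem_Icc.mp hj
    exact mul_nonneg (hfnn j hj1 hj2) (hvnn j hj1 hj2)
  have hB : S + D * t ≥ (v i / (n:ℝ)) * ((n:ℝ) + D) := by
    have h := hgood i h1i hin
    rw [ht]
    linarith [mul_assoc D (f i) (v i)]
  have hDnn : 0 ≤ D := by
    have h1 : (1:ℝ) ≤ (1 + δ) / (1 - δ) := by
      rw [le_div_iff₀ h1d]; linarith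
    rw [hD]; nlinarith [h1, sq_nonneg ((1 + δ) / (1 - δ) - 1)]
  have hr2D : r ^ 2 * (1 + D) = 1 := by
    rw [hr, hD]; field_simp; ring
  have hkey : c * (1 + D) = ((n:ℝ) + D) / (n:ℝ) := by
    rw [hc, hD]; field_simp; ring
  have hθi := hθ i h1i hin
  have step1 : ∑ j ∈ Finset.Icc 1 n, θ j * f j ≥ r * (S - t) + θ i * f i := by
    have hsplit : ∑ j ∈ Finset.Icc 1 n, θ j * f j
        = (∑ j ∈ (Finset.Icc 1 n).erase i, θ j * f j) + θ i * f i := by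
      rw [Finset.sum_erase_add _ _ hmem]
    have hsplit2 : S - t = ∑ j ∈ (Finset.Icc 1 n).erase i, f j * v j := by
      have := Finset.sum_erase_add (Finset.Icc 1 n) (fun j => f j * v j) hmem
      rw [hS, ht]
      linarith
    have hbound : r * (S - t) ≤ ∑ j ∈ (Finset.Icc 1 n).erase i, θ j * f j := by
      rw [hsplit2, Finset.mul_sum]
      refine Finset.sum_le_sum (fun j hj => ?_)
      obtain ⟨hj1, hj2⟩ := Finset.mem_Icc.mp (Finset.mem_of_mem_erase hj)
      have hθj := (hθ j hj1 hj2).1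
      have hfj := hfnn j hj1 hj2
      calc r * (f j * v j) = (r * v j) * f j := by ring
        _ ≤ θ j * f j := mul_le_mul_of_nonneg_right hθj hfj
    rw [hsplit]; linarith
  have h1D : (0:ℝ) < 1 + D := by linarith
  have h2 : (v i / (n:ℝ)) * ((n:ℝ) + D) = c * (1 + D) * v i := by
    rw [hkey]; ring
  rw [h2] at hB
  by_cases hcase : c ≤ f i
  · -- use θ i ≥ r * v i
    have hSc : c * v i ≤ S := by
      have hDS : D * t ≤ D * S := mul_le_mul_of_nonneg_left hA hDnn
      nlinarith [hB, hDS, hDnn]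
    have hθlb : r * v i ≤ θ i := hθi.1
    have h4 : (f i - c) * (r * v i) ≤ (f i - c) * θ i :=
      mul_le_mul_of_nonneg_left hθlb (by linarith)
    have h5 : (0:ℝ) ≤ r * (S - c * v i) :=
      mul_nonneg hr0.le (by linarith)
    have hfin : r * (S - t) + θ i * f i ≥ c * θ i := by nlinarith [h4, h5, ht]
    linarith
  · push_neg at hcase
    have hrone : r * ((1 + δ) / (1 - δ)) = 1 := by
      rw [hr]; field_simp
    have hθub : r * θ i ≤ v i := by
      calc r * θ i ≤ r * ((1 + δ) / (1 - δ) * v i) :=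
            mul_le_mul_of_nonneg_left hθi.2 hr0.le
        _ = (r * ((1 + δ) / (1 - δ))) * v i := by ring
        _ = v i := by rw [hrone]; ring
    have hkey2 : r ^ 2 * S + (1 - r ^ 2) * t ≥ c * v i := by
      have h1 : r ^ 2 * (S + D * t) ≥ r ^ 2 * (c * (1 + D) * v i) :=
        mul_le_mul_of_nonneg_left hB (by positivity)
      nlinarith [h1, hr2D]
    have h4 : (c - f i) * (r * θ i) ≤ (c - f i) * v i :=
      mul_le_mul_of_nonneg_left hθub (by linarith)
    have hfin : r * (r * (S - t) + θ i * f i) ≥ r * (c * θ i) := by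
      nlinarith [h4, hkey2, ht]
    have hfin2 : r * (S - t) + θ i * f i ≥ c * θ i :=
      le_of_mul_le_mul_left hfin hr0
    linarith
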